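/- Let n ≥ 2, fix a vacuum charge k ∈ ℤ and a color ℓ ∈ ℤ, and let λ be a Young diagram. Work in the field F = ℚ(𝔮, q1, w) of rational functions in independent indeterminates, with q3 := 𝔮^{−2} q1^{−1}, x_s := q1^{λ_s−1} q3^{s−1}, and ψ(u) := (𝔮 − 𝔮^{−1}u)/(1 − u). Then for every integer M ≥ ℓ(λ): ∏_{1≤s≤M, λ_s+ℓ ≡ s+k (mod n)} ψ(x_s w) · ∏_{1≤s≤M+1, λ_s+ℓ+1 ≡ s+k (mod n)} ψ(q3^{−1} x_s w)^{−1} = ∏_{s : (s,λ_s) ∈ R_ℓ^{(k)}(λ)} ψ(x_s w) · ∏_{s : (s,λ_s+1) ∈ A_ℓ^{(k)}(λ)} ψ(q3^{−1} x_s w)^{−1}; in particular the left-hand side is independent of M ≥ ℓ(λ). -/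

import Mathlib

open Finset

noncomputable section

/-- The field `ℚ(𝔮, q1, w)` of rational functions in three independent indeterminates. -/
abbrev RatField : Type := FractionRing (MvPolynomial (Fin 3) ℚ)

/-- The indeterminate `𝔮`. -/
def qq : RatField := algebraMap (MvPolynomial (Fin 3) ℚ) RatField (MvPolynomial.X 0)

/-- The indeterminate `q1`. -/
def qone : RatField := algebraMap (MvPolynomial (Fin 3) ℚ) RatField (MvPolynomial.X 1)

/-- The indeterminate `w`. -/
def ww : RatField := algebraMap (MvPolynomial (Fin 3) ℚ) RatField (MvPolynomial.X 2)

/-- `q3 := 𝔮⁻² q1⁻¹`. -/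
def qthree : RatField := qq ^ (-2 : ℤ) * qone⁻¹

/-- `ψ(u) = (𝔮 - 𝔮⁻¹ u)/(1 - u)`. -/
def psi (u : RatField) : RatField := (qq - qq⁻¹ * u) / (1 - u)

/-- `x_s := q1^{λ_s - 1} q3^{s - 1}` (here `s` is the 0-based row index, so the
1-based row index is `s+1`). -/
def xvar (lam : YoungDiagram) (s : ℕ) : RatField :=
  qone ^ ((lam.rowLen s : ℤ) - 1) * qthree ^ (s : ℤ)

namespace VEC

lemma algInj : Function.Injective (algebraMap (MvPolynomial (Fin 3) ℚ) RatField) :=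
  IsFractionRing.injective _ _

lemma qq_ne_zero : qq ≠ 0 := by
  simpa [qq, map_eq_zero_iff _ algInj] using MvPolynomial.X_ne_zero (R := ℚ) (n := (0 : Fin 3))

lemma qone_ne_zero : qone ≠ 0 := by
  simpa [qone, map_eq_zero_iff _ algInj] using MvPolynomial.X_ne_zero (R := ℚ) (n := (1 : Fin 3))

lemma ww_ne_zero : ww ≠ 0 := by
  simpa [ww, map_eq_zero_iff _ algInj] using MvPolynomial.X_ne_zero (R := ℚ) (n := (2 : Fin 3))

lemma qthree_ne_zero : qthree ≠ 0 :=
  mul_ne_zero (zpow_ne_zero _ qq_ne_zero) (inv_ne_zero qone_ne_zero)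

lemma mono_ne_one (α β : ℤ) : qq ^ α * qone ^ β * ww ≠ 1 := by
  intro h
  set m : ℤ := |α| + |β| with hm
  have hq := qq_ne_zero
  have hq1 := qone_ne_zero
  have hαm : 0 ≤ α + m := by have := neg_abs_le α; have := abs_nonneg β; omega
  have hβm : 0 ≤ β + m := by have := neg_abs_le β; have := abs_nonneg α; omega
  have hm0 : 0 ≤ m := by have := abs_nonneg α; have := abs_nonneg β; omega
  have h2 : qq ^ (α + m) * qone ^ (β + m) * ww = qq ^ m * qone ^ m := by
    rw [zpow_add₀ hq, zpow_add₀ hq1]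
    calc qq ^ α * qq ^ m * (qone ^ β * qone ^ m) * ww
        = qq ^ α * qone ^ β * ww * (qq ^ m * qone ^ m) := by ring
      _ = qq ^ m * qone ^ m := by rw [h, one_mul]
  set a := (α + m).toNat with ha
  set b := (β + m).toNat with hb
  set c := m.toNat with hc
  have ea : α + m = (a : ℤ) := (Int.toNat_of_nonneg hαm).symm
  have eb : β + m = (b : ℤ) := (Int.toNat_of_nonneg hβm).symm
  have ec : m = (c : ℤ) := (Int.toNat_of_nonneg hm0).symm
  rw [ea, eb, ec, zpow_natCast, zpow_natCast, zpow_natCast, zpow_natCast] at h2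
  have h3 : (MvPolynomial.X 0 ^ a * MvPolynomial.X 1 ^ b * MvPolynomial.X 2 :
      MvPolynomial (Fin 3) ℚ) = MvPolynomial.X 0 ^ c * MvPolynomial.X 1 ^ c := by
    apply algInj
    simpa [map_mul, map_pow, qq, qone, ww] using h2
  rw [show (MvPolynomial.X 2 : MvPolynomial (Fin 3) ℚ) = MvPolynomial.X 2 ^ 1 from
    (pow_one _).symm] at h3
  simp only [MvPolynomial.X_pow_eq_monomial, MvPolynomial.monomial_mul, mul_one] at h3
  rw [MvPolynomial.monomial_eq_monomial_iff] at h3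
  rcases h3 with ⟨h4, -⟩ | ⟨h4, -⟩
  · have := DFunLike.congr_fun h4 2
    simp [Finsupp.single_apply] at this
  · norm_num at h4


lemma mono_ne_qqsq (α β : ℤ) : qq ^ α * qone ^ β * ww ≠ qq ^ (2:ℤ) := by
  intro h
  apply mono_ne_one (α - 2) β
  have e : qq ^ (α - 2) * qone ^ β * ww = qq ^ α * qone ^ β * ww * (qq ^ (2:ℤ))⁻¹ := by
    rw [zpow_sub₀ qq_ne_zero, div_eq_mul_inv]; ring
  rw [e, h, mul_inv_cancel₀ (zpow_ne_zero _ qq_ne_zero)]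

lemma psi_mono_ne_zero (α β : ℤ) : psi (qq ^ α * qone ^ β * ww) ≠ 0 := by
  unfold psi
  apply div_ne_zero
  · intro h
    apply mono_ne_qqsq α β
    have h1 : qq⁻¹ * (qq ^ α * qone ^ β * ww) = qq := by linear_combination -h
    calc qq ^ α * qone ^ β * ww = qq * (qq⁻¹ * (qq ^ α * qone ^ β * ww)) := by
          rw [← mul_assoc, mul_inv_cancel₀ qq_ne_zero, one_mul]
      _ = qq * qq := by rw [h1]
      _ = qq ^ (2:ℤ) := by rw [show (2:ℤ) = ((2:ℕ):ℤ) by norm_num, zpow_natCast, sq]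
  · intro h
    exact mono_ne_one α β (by linear_combination -h)

lemma pow_zpow (a : RatField) (ha : a ≠ 0) (m : ℤ) (n : ℕ) : (a ^ m) ^ n = a ^ (m * n) := by
  induction n with
  | zero => simp
  | succ n ih =>
      rw [pow_succ, ih, ← zpow_add₀ ha]
      congr 1; push_cast; ring

lemma xvar_mul_ww_eq (lam : YoungDiagram) (s : ℕ) :
    xvar lam s * ww = qq ^ ((-2 : ℤ) * s) * qone ^ ((lam.rowLen s : ℤ) - 1 - s) * ww := by
  unfold xvar qthree
  rw [zpow_natCast _ s, mul_pow, pow_zpow _ qq_ne_zero, inv_pow,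
    zpow_sub₀ qone_ne_zero ((lam.rowLen s : ℤ) - 1) s, zpow_natCast, div_eq_mul_inv]
  ring

lemma psi_xvar_ne_zero (lam : YoungDiagram) (s : ℕ) : psi (xvar lam s * ww) ≠ 0 := by
  rw [xvar_mul_ww_eq]; exact psi_mono_ne_zero _ _

lemma qthree_inv : qthree⁻¹ = qq ^ (2:ℤ) * qone := by
  unfold qthree
  rw [mul_inv, inv_inv, ← zpow_neg]
  norm_num

lemma q3inv_xvar_mul_ww_eq (lam : YoungDiagram) (s : ℕ) :
    qthree⁻¹ * xvar lam s * ww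
      = qq ^ (2 + (-2:ℤ) * s) * qone ^ ((lam.rowLen s : ℤ) - s) * ww := by
  calc qthree⁻¹ * xvar lam s * ww = qthree⁻¹ * (xvar lam s * ww) := by ring
    _ = (qq ^ (2:ℤ) * qone) * (qq ^ ((-2:ℤ) * s) * qone ^ ((lam.rowLen s : ℤ) - 1 - s) * ww) := by
        rw [qthree_inv, xvar_mul_ww_eq]
    _ = qq ^ (2 + (-2:ℤ) * s) * qone ^ ((lam.rowLen s : ℤ) - s) * ww := by
        rw [zpow_add₀ qq_ne_zero,
          show (lam.rowLen s : ℤ) - s = ((lam.rowLen s : ℤ) - 1 - s) + 1 by ring,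
          zpow_add₀ qone_ne_zero, zpow_one]
        ring

lemma psi_q3inv_xvar_ne_zero (lam : YoungDiagram) (s : ℕ) :
    psi (qthree⁻¹ * xvar lam s * ww) ≠ 0 := by
  rw [q3inv_xvar_mul_ww_eq]; exact psi_mono_ne_zero _ _

lemma q3inv_xvar_succ (lam : YoungDiagram) (s : ℕ) (h : lam.rowLen (s+1) = lam.rowLen s) :
    qthree⁻¹ * xvar lam (s+1) = xvar lam s := by
  unfold xvar
  rw [h, show ((s+1 : ℕ) : ℤ) = (s:ℤ) + 1 by push_cast; ring, zpow_add_one₀ qthree_ne_zero]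
  have e : qthree⁻¹ * qthree = 1 := inv_mul_cancel₀ qthree_ne_zero
  linear_combination (qone ^ ((lam.rowLen s : ℤ) - 1) * qthree ^ ((s : ℕ) : ℤ)) * e


lemma rowLen_pos_iff (lam : YoungDiagram) (s : ℕ) : 0 < lam.rowLen s ↔ s < lam.colLen 0 := by
  rw [← YoungDiagram.mem_iff_lt_rowLen, YoungDiagram.mem_iff_lt_colLen]

lemma mem_cells_iff (lam : YoungDiagram) (a b : ℕ) : (a, b) ∈ lam.cells ↔ b < lam.rowLen a := by
  rw [YoungDiagram.mem_cells, YoungDiagram.mem_iff_lt_rowLen]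

lemma addable_isLowerSet (lam : YoungDiagram) (s : ℕ)
    (h : ∀ t, t < s → lam.rowLen s < lam.rowLen t) :
    IsLowerSet (↑(insert (s, lam.rowLen s) lam.cells) : Set (ℕ × ℕ)) := by
  intro x y hle hx
  simp only [Finset.coe_insert, Set.mem_insert_iff, Finset.mem_coe] at hx ⊢
  rcases hx with rfl | hx
  · obtain ⟨a, b⟩ := y
    obtain ⟨h1, h2⟩ := Prod.mk_le_mk.1 hle
    rcases Nat.eq_or_lt_of_le h1 with rfl | hlt
    · rcases Nat.eq_or_lt_of_le h2 with rfl | hlt2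
      · exact Or.inl rfl
      · exact Or.inr ((mem_cells_iff lam a b).2 hlt2)
    · exact Or.inr ((mem_cells_iff lam a b).2 (lt_of_le_of_lt h2 (h a hlt)))
  · exact Or.inr (lam.isLowerSet hle hx)

lemma not_addable_succ (lam : YoungDiagram) (s : ℕ) (h : lam.rowLen (s+1) = lam.rowLen s) :
    ¬ IsLowerSet (↑(insert (s+1, lam.rowLen (s+1)) lam.cells) : Set (ℕ × ℕ)) := by
  intro H
  have hmem : ((s+1, lam.rowLen (s+1)) : ℕ × ℕ) ∈
      (↑(insert (s+1, lam.rowLen (s+1)) lam.cells) : Set (ℕ × ℕ)) := by simp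
  have hy := H (show ((s, lam.rowLen (s+1)) : ℕ × ℕ) ≤ (s+1, lam.rowLen (s+1)) from
    Prod.mk_le_mk.2 ⟨by omega, le_refl _⟩) hmem
  simp only [Finset.coe_insert, Set.mem_insert_iff, Finset.mem_coe, Prod.mk.injEq] at hy
  rcases hy with ⟨h1, -⟩ | hy
  · omega
  · rw [mem_cells_iff] at hy; omega

lemma removable_isLowerSet (lam : YoungDiagram) (s : ℕ) (h : lam.rowLen (s+1) < lam.rowLen s) :
    IsLowerSet (↑(lam.cells.erase (s, lam.rowLen s - 1)) : Set (ℕ × ℕ)) := by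
  intro x y hle hx
  simp only [Finset.coe_erase, Set.mem_diff, Finset.mem_coe, Set.mem_singleton_iff] at hx ⊢
  obtain ⟨hxc, hxne⟩ := hx
  refine ⟨lam.isLowerSet hle hxc, ?_⟩
  intro hyeq
  obtain ⟨a, b⟩ := x
  subst hyeq
  obtain ⟨h1, h2⟩ := Prod.mk_le_mk.1 hle
  rw [mem_cells_iff] at hxc
  by_cases ha : a = s
  · subst ha
    exact hxne (by rw [Prod.mk.injEq]; omega)
  · have := lam.rowLen_anti (s+1) a (by omega)
    omega

lemma not_removable (lam : YoungDiagram) (s : ℕ) (h : lam.rowLen (s+1) = lam.rowLen s)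
    (hpos : 0 < lam.rowLen s) :
    ¬ IsLowerSet (↑(lam.cells.erase (s, lam.rowLen s - 1)) : Set (ℕ × ℕ)) := by
  intro H
  have hx : ((s+1, lam.rowLen s - 1) : ℕ × ℕ) ∈
      (↑(lam.cells.erase (s, lam.rowLen s - 1)) : Set (ℕ × ℕ)) := by
    simp only [Finset.coe_erase, Set.mem_diff, Finset.mem_coe, Set.mem_singleton_iff]
    refine ⟨(mem_cells_iff lam _ _).2 (by omega), ?_⟩
    rw [Prod.mk.injEq]
    omega
  have hy := H (show ((s, lam.rowLen s - 1) : ℕ × ℕ) ≤ (s+1, lam.rowLen s - 1) from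
    Prod.mk_le_mk.2 ⟨by omega, le_refl _⟩) hx
  simp only [Finset.mem_coe, Finset.mem_erase, ne_eq] at hy
  exact hy.1 trivial


open scoped Classical

lemma cancel_step (n : ℕ) (k ℓ : ℤ) (lam : YoungDiagram) (s : ℕ)
    (h : lam.rowLen (s+1) = lam.rowLen s) :
    (if (((lam.rowLen s : ℤ) + ℓ : ℤ) : ZMod n) = (((s : ℤ) + 1 + k : ℤ) : ZMod n)
      then psi (xvar lam s * ww) else 1) *
    (if (((lam.rowLen (s+1) : ℤ) + ℓ + 1 : ℤ) : ZMod n)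
        = ((((s+1 : ℕ) : ℤ) + 1 + k : ℤ) : ZMod n)
      then (psi (qthree⁻¹ * xvar lam (s+1) * ww))⁻¹ else 1) = 1 := by
  have hiff : ((((lam.rowLen (s+1) : ℤ) + ℓ + 1 : ℤ)) : ZMod n)
      = ((((s+1 : ℕ) : ℤ) + 1 + k : ℤ) : ZMod n)
      ↔ (((lam.rowLen s : ℤ) + ℓ : ℤ) : ZMod n) = (((s : ℤ) + 1 + k : ℤ) : ZMod n) := by
    rw [h]
    push_cast
    constructor <;> intro hh <;> linear_combination hh
  rw [if_congr hiff rfl rfl, q3inv_xvar_succ lam s h]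
  by_cases hc : (((lam.rowLen s : ℤ) + ℓ : ℤ) : ZMod n) = (((s : ℤ) + 1 + k : ℤ) : ZMod n)
  · rw [if_pos hc, if_pos hc, mul_inv_cancel₀ (psi_xvar_ne_zero lam s)]
  · rw [if_neg hc, one_mul, if_neg hc]

lemma main_step (n : ℕ) (k ℓ : ℤ) (lam : YoungDiagram) (s : ℕ) (hs : s < lam.colLen 0) :
    (if (((lam.rowLen s : ℤ) + ℓ : ℤ) : ZMod n) = (((s : ℤ) + 1 + k : ℤ) : ZMod n)
      then psi (xvar lam s * ww) else 1) *
    (if (((lam.rowLen (s+1) : ℤ) + ℓ + 1 : ℤ) : ZMod n)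
        = ((((s+1 : ℕ) : ℤ) + 1 + k : ℤ) : ZMod n)
      then (psi (qthree⁻¹ * xvar lam (s+1) * ww))⁻¹ else 1)
    =
    (if ((s, lam.rowLen s - 1) ∈ lam.cells ∧
          IsLowerSet (↑(lam.cells.erase (s, lam.rowLen s - 1)) : Set (ℕ × ℕ)) ∧
          ((((s : ℤ) + 1 - (lam.rowLen s : ℤ) + k : ℤ) : ZMod n) = (ℓ : ZMod n)))
      then psi (xvar lam s * ww) else 1) *
    (if ((s+1, lam.rowLen (s+1)) ∉ lam.cells ∧
          IsLowerSet (↑(insert (s+1, lam.rowLen (s+1)) lam.cells) : Set (ℕ × ℕ)) ∧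
          (((((s+1 : ℕ) : ℤ) - (lam.rowLen (s+1) : ℤ) + k : ℤ) : ZMod n) = (ℓ : ZMod n)))
      then (psi (qthree⁻¹ * xvar lam (s+1) * ww))⁻¹ else 1) := by
  have hpos : 0 < lam.rowLen s := (rowLen_pos_iff lam s).2 hs
  rcases (lam.rowLen_anti s (s+1) (by omega)).lt_or_eq with hlt | heq
  · -- removable corner at s, addable at s+1
    have hmem : (s, lam.rowLen s - 1) ∈ lam.cells := (mem_cells_iff lam _ _).2 (by omega)
    have hlow := removable_isLowerSet lam s hlt
    have hnm : (s+1, lam.rowLen (s+1)) ∉ lam.cells := by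
      rw [mem_cells_iff]; omega
    have hlow2 := addable_isLowerSet lam (s+1)
      (fun t ht => lt_of_lt_of_le hlt (lam.rowLen_anti t s (by omega)))
    congr 1
    · refine if_congr ?_ rfl rfl
      simp only [hmem, hlow, true_and]
      push_cast
      constructor <;> intro hh <;> linear_combination -hh
    · refine if_congr ?_ rfl rfl
      simp only [hnm, hlow2, true_and, not_false_iff]
      push_cast
      constructor <;> intro hh <;> linear_combination -hh
  · -- no corner here: both sides are 1
    rw [cancel_step n k ℓ lam s heq, if_neg, if_neg, mul_one]
    · rintro ⟨-, hl, -⟩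
      exact not_addable_succ lam s heq hl
    · rintro ⟨-, hl, -⟩
      exact not_removable lam s heq hpos hl

lemma base_step (n : ℕ) (k ℓ : ℤ) (lam : YoungDiagram) :
    (if (((lam.rowLen 0 : ℤ) + ℓ + 1 : ℤ) : ZMod n) = ((((0:ℕ) : ℤ) + 1 + k : ℤ) : ZMod n)
      then (psi (qthree⁻¹ * xvar lam 0 * ww))⁻¹ else 1)
    =
    (if ((0, lam.rowLen 0) ∉ lam.cells ∧
          IsLowerSet (↑(insert (0, lam.rowLen 0) lam.cells) : Set (ℕ × ℕ)) ∧
          ((((0:ℕ) : ℤ) - (lam.rowLen 0 : ℤ) + k : ℤ) : ZMod n) = (ℓ : ZMod n))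
      then (psi (qthree⁻¹ * xvar lam 0 * ww))⁻¹ else 1) := by
  have hnm : (0, lam.rowLen 0) ∉ lam.cells := by
    rw [mem_cells_iff]; omega
  have hlow := addable_isLowerSet lam 0 (fun t ht => absurd ht (by omega))
  refine if_congr ?_ rfl rfl
  simp only [hnm, hlow, true_and, not_false_iff]
  push_cast
  constructor <;> intro hh <;> linear_combination -hh

end VEC

open VEC in
open scoped Classical in
/-- The eigenvalue of `K⁺_ℓ(z)` on `|λ)`: for every `M ≥ ℓ(λ)`, the product
`∏_{1≤s≤M, λ_s+ℓ ≡ s+k} ψ(x_s w) ∏_{1≤s≤M+1, λ_s+ℓ+1 ≡ s+k} ψ(q3⁻¹x_s w)⁻¹`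
equals the product over removable corners of color `ℓ` of `ψ(x_s w)` times the
product over addable corners of color `ℓ` of `ψ(q3⁻¹ x_s w)⁻¹` (vacuum charge `k`);
in particular the left-hand side is independent of `M`. -/
theorem vertical_eigenvalue_corners (n : ℕ) (hn : 2 ≤ n) (k ℓ : ℤ)
    (lam : YoungDiagram) (M : ℕ) (hM : lam.colLen 0 ≤ M) :
    (∏ s ∈ (Finset.range M).filter
        (fun (s : ℕ) => (((lam.rowLen s : ℤ) + ℓ : ℤ) : ZMod n) = (((s : ℤ) + 1 + k : ℤ) : ZMod n)),
      psi (xvar lam s * ww)) *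
    (∏ s ∈ (Finset.range (M + 1)).filter
        (fun (s : ℕ) => (((lam.rowLen s : ℤ) + ℓ + 1 : ℤ) : ZMod n) = (((s : ℤ) + 1 + k : ℤ) : ZMod n)),
      (psi (qthree⁻¹ * xvar lam s * ww))⁻¹)
    =
    (∏ s ∈ (Finset.range (lam.colLen 0)).filter
        (fun (s : ℕ) => (s, lam.rowLen s - 1) ∈ lam.cells ∧
          IsLowerSet (↑(lam.cells.erase (s, lam.rowLen s - 1)) : Set (ℕ × ℕ)) ∧
          ((((s : ℤ) + 1 - (lam.rowLen s : ℤ) + k : ℤ) : ZMod n) = (ℓ : ZMod n))),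
      psi (xvar lam s * ww)) *
    (∏ s ∈ (Finset.range (lam.colLen 0 + 1)).filter
        (fun (s : ℕ) => (s, lam.rowLen s) ∉ lam.cells ∧
          IsLowerSet (↑(insert (s, lam.rowLen s) lam.cells) : Set (ℕ × ℕ)) ∧
          ((((s : ℤ) - (lam.rowLen s : ℤ) + k : ℤ) : ZMod n) = (ℓ : ZMod n))),
      (psi (qthree⁻¹ * xvar lam s * ww))⁻¹) := by
  rw [Finset.prod_filter, Finset.prod_filter, Finset.prod_filter, Finset.prod_filter,
    Finset.prod_range_succ', Finset.prod_range_succ',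
    ← mul_assoc, ← Finset.prod_mul_distrib, ← mul_assoc, ← Finset.prod_mul_distrib,
    ← Finset.prod_range_mul_prod_Ico _ hM]
  have htail : ∀ s ∈ Finset.Ico (lam.colLen 0) M,
      (if (((lam.rowLen s : ℤ) + ℓ : ℤ) : ZMod n) = (((s : ℤ) + 1 + k : ℤ) : ZMod n)
        then psi (xvar lam s * ww) else 1) *
      (if (((lam.rowLen (s+1) : ℤ) + ℓ + 1 : ℤ) : ZMod n)
          = ((((s+1 : ℕ) : ℤ) + 1 + k : ℤ) : ZMod n)
        then (psi (qthree⁻¹ * xvar lam (s+1) * ww))⁻¹ else 1) = 1 := by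
    intro s hs
    rw [Finset.mem_Ico] at hs
    have e1 : lam.rowLen s = 0 := by
      by_contra hne
      have := (rowLen_pos_iff lam s).1 (Nat.pos_of_ne_zero hne)
      omega
    have e2 : lam.rowLen (s+1) = 0 := by
      by_contra hne
      have := (rowLen_pos_iff lam (s+1)).1 (Nat.pos_of_ne_zero hne)
      omega
    exact cancel_step n k ℓ lam s (by rw [e1, e2])
  rw [Finset.prod_eq_one htail, mul_one]
  congr 1
  · exact Finset.prod_congr rfl (fun s hs => main_step n k ℓ lam s (Finset.mem_range.1 hs))
  · exact base_step n k ℓ lam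

end
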